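/- Transfer theorem: Let ⟨A, C, d, O, v, (≺_a)⟩ be an infinite sequential game and Γ ⊆ P(C^ω). Assume: (1) O is well-orderable; (2) each ≺_a⁻¹ is strictly well-founded; (3) for all O' ⊆ O, c ∈ C, γ ∈ C*, the set v⁻¹(O') ∩ γ(C−{c})C^ω belongs to Γ; (4) the two-player win-lose game ⟨C, D, W⟩ is determined for all W ∈ Γ and D ⊆ C*. Then the game has a Nash equilibrium. -/

import Mathlib

variable {C A O : Type*}

/-- The prefix of length `n` of an infinite play. -/
def pref (p : ℕ → C) (n : ℕ) : List C := List.ofFn (fun i : Fin n => p (i : ℕ))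

/-- Plays compatible with a partial strategy profile. -/
def Plays (s : List C → Option C) : Set (ℕ → C) :=
  {p | ∀ (n : ℕ) (c : C), s (pref p n) = some c → p n = c}

/-- The history of length n induced by a total strategy profile. -/
def hist (t : List C → C) : ℕ → List C
  | 0 => []
  | n + 1 => hist t n ++ [t (hist t n)]

/-- The play induced by a total strategy profile: p(t)_n = t(p(t)_{<n}). -/
def play (t : List C → C) (n : ℕ) : C := t (hist t n)

open Classical in
/-- Restriction of a partial strategy profile to a set of histories. -/
noncomputable def restr (s : List C → Option C) (X : Set (List C)) (γ : List C) : Option C :=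
  if γ ∈ X then s γ else none

/-- Restriction of a total strategy profile to a set of histories (as a partial one). -/
noncomputable def restrT (s : List C → C) (X : Set (List C)) : List C → Option C :=
  restr (fun γ => some (s γ)) X

/-- γC^* : finite sequences extending γ. -/
def ext (γ : List C) : Set (List C) := {δ | γ <+: δ}

/-- γC^ω : infinite sequences extending γ. -/
def extω (γ : List C) : Set (ℕ → C) := {p | pref p γ.length = γ}


/-- A <ₐ-terminal interval. -/
def Terminal (lt : O → O → Prop) (I : Set O) : Prop := ∀ x y, lt x y → x ∈ I → y ∈ I

/-- The guarantee g_a(γ, s) of agent a at node γ under strategy profile s. -/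
noncomputable def guar (d : List C → A) (v : (ℕ → C) → O) (lt : A → O → O → Prop)
    (a : A) (γ : List C) (s : List C → C) : Set O :=
  {o | ∃ p ∈ Plays (restrT s {δ | δ ∈ ext γ ∧ d δ = a}) ∩ extω γ, lt a (v p) o ∨ v p = o}

/-- The best guarantee G_a(γ). -/
noncomputable def bestGuar (d : List C → A) (v : (ℕ → C) → O) (lt : A → O → O → Prop)
    (a : A) (γ : List C) : Set O :=
  ⋂ s : List C → C, guar d v lt a γ s

/-- Nash equilibrium of an infinite sequential game. -/
def NashEq (d : List C → A) (v : (ℕ → C) → O) (prec : A → O → O → Prop)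
    (s : List C → C) : Prop :=
  ∀ (a : A) (s' : List C → C), (∀ γ, d γ ≠ a → s' γ = s γ) →
    ¬ prec a (v (play s)) (v (play s'))

/-- Winning strategy for agent a (owning D) in ⟨C, D, W⟩. -/
def WinA (D : Set (List C)) (W : Set (ℕ → C)) (sa : List C → C) : Prop :=
  ∀ t : List C → C, (∀ γ ∈ D, t γ = sa γ) → play t ∈ W

/-- Winning strategy for agent b (owning C^* \ D) in ⟨C, D, W⟩. -/
def WinB (D : Set (List C)) (W : Set (ℕ → C)) (sb : List C → C) : Prop :=
  ∀ t : List C → C, (∀ γ ∉ D, t γ = sb γ) → play t ∉ W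

/-- Determinacy of the two-agent win-lose game ⟨C, D, W⟩. -/
def Determined (D : Set (List C)) (W : Set (ℕ → C)) : Prop :=
  (∃ sa, WinA D W sa) ∨ (∃ sb, WinB D W sb)

open Classical in
section
namespace TransferAux

theorem pref_succ (p : ℕ → C) (n : ℕ) : pref p (n + 1) = pref p n ++ [p n] := by
  apply List.ext_getElem (by simp [pref])
  intro i h1 h2
  have hi : i < n + 1 := by simpa [pref] using h1
  simp only [pref, List.getElem_ofFn]
  rcases Nat.lt_or_ge i n with h | h
  · rw [List.getElem_append_left (by simpa [pref] using h)]
    simp [pref]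
  · have hin : i = n := by omega
    subst hin
    rw [List.getElem_append_right (by simp [pref])]
    simp [pref]

theorem length_pref (p : ℕ → C) (n : ℕ) : (pref p n).length = n := by simp [pref]

theorem getElem_pref (p : ℕ → C) {n k : ℕ} (h : k < (pref p n).length) :
    (pref p n)[k] = p k := by simp [pref]

theorem pref_eq_take (p : ℕ → C) {k n : ℕ} (hk : k ≤ n) :
    pref p k = (pref p n).take k := by
  apply List.ext_getElem
  · simp [length_pref, hk]
  · intro i h1 h2
    rw [List.getElem_take]
    rw [getElem_pref, getElem_pref]

theorem pref_ext {p q : ℕ → C} {n : ℕ} (h : ∀ i, i < n → p i = q i) :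
    pref p n = pref q n := by
  apply List.ext_getElem (by simp [length_pref])
  intro i h1 h2
  rw [getElem_pref, getElem_pref]
  exact h i (by simpa [length_pref] using h1)

theorem hist_eq_pref {t : List C → C} {q : ℕ → C} (h : ∀ n, t (pref q n) = q n) :
    ∀ n, hist t n = pref q n := by
  intro n
  induction n with
  | zero => rfl
  | succ n ih => rw [hist, ih, pref_succ, h n]

theorem play_path {t : List C → C} {q : ℕ → C} (h : ∀ n, t (pref q n) = q n) :
    play t = q := by
  funext n
  rw [play, hist_eq_pref h, h]

theorem pref_play (t : List C → C) (n : ℕ) : pref (play t) n = hist t n := by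
  induction n with
  | zero => rfl
  | succ n ih => rw [pref_succ, hist, ih, play]

theorem followA {D : Set (List C)} {W : Set (ℕ → C)} {sa : List C → C}
    (hA : WinA D W sa) (q : ℕ → C)
    (h : ∀ n, pref q n ∈ D → sa (pref q n) = q n) : q ∈ W := by
  classical
  set t : List C → C := fun δ => if δ ∈ D then sa δ else
      (if δ = pref q δ.length then q δ.length else sa δ) with ht
  have hag : ∀ γ ∈ D, t γ = sa γ := fun γ hγ => if_pos hγ
  have hpath : ∀ n, t (pref q n) = q n := by
    intro n
    by_cases hD : pref q n ∈ D
    · rw [ht]; simp only [if_pos hD]; exact h n hD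
    · rw [ht]; simp only [if_neg hD, length_pref, if_pos rfl, if_true]
  have := hA t hag
  rwa [play_path hpath] at this

theorem followB {D : Set (List C)} {W : Set (ℕ → C)} {sb : List C → C}
    (hB : WinB D W sb) (q : ℕ → C)
    (h : ∀ n, pref q n ∉ D → sb (pref q n) = q n) : q ∉ W := by
  classical
  set t : List C → C := fun δ => if δ ∉ D then sb δ else
      (if δ = pref q δ.length then q δ.length else sb δ) with ht
  have hag : ∀ γ ∉ D, t γ = sb γ := fun γ hγ => if_pos hγ
  have hpath : ∀ n, t (pref q n) = q n := by
    intro n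
    by_cases hD : pref q n ∉ D
    · rw [ht]; simp only [if_pos hD]; exact h n hD
    · rw [ht]; simp only [if_neg hD, length_pref, if_pos rfl, if_true]
  have := hB t hag
  rwa [play_path hpath] at this

theorem steer [Nonempty C] {D : Set (List C)} {W : Set (ℕ → C)} {sa : List C → C}
    {γ : List C} (hA : WinA D W sa) (hW : W ⊆ extω γ) {k : ℕ} (hk : k < γ.length)
    (hD : γ.take k ∈ D) : sa (γ.take k) = γ[k] := by
  classical
  set t : List C → C := fun δ => if δ ∈ D then sa δ else
      (if h : δ.length < γ.length then γ[δ.length] else Classical.arbitrary C) with ht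
  have hq : play t ∈ W := hA t (fun γ' h => if_pos h)
  have hq' : pref (play t) γ.length = γ := hW hq
  have htake : pref (play t) k = γ.take k := by
    rw [pref_eq_take (play t) (le_of_lt hk), hq']
  have e1 : play t k = γ[k] := by
    have h2 : (pref (play t) γ.length)[k]'(by rw [hq']; exact hk) = play t k :=
      getElem_pref _ _
    rw [← h2]
    congr 1
  have e2 : play t k = t (γ.take k) := by
    rw [play, ← pref_play, htake]
  rw [e2, ht] at e1
  simpa only [if_pos hD] using e1



variable {A O : Type*}

theorem no_ascending {α : Type*} {R : α → α → Prop}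
    (h : WellFounded fun x y => R y x) (g : ℕ → α) (hg : ∀ k, R (g k) (g (k + 1))) :
    False := by
  have H : ∀ x, Acc (fun x y => R y x) x → ∀ k, g k = x → False := by
    intro x hx
    induction hx with
    | intro y hy ih =>
      intro k hk
      exact ih (g (k + 1)) (hk ▸ hg k) (k + 1) rfl
  exact H (g 0) (h.apply _) 0 rfl

theorem exists_linear (prec : A → O → O → Prop)
    (h1 : ∃ r : O → O → Prop, IsWellOrder O r)
    (h2 : ∀ a, WellFounded fun x y => prec a y x) :
    ∃ lt : A → O → O → Prop,
      (∀ a x y, prec a x y → lt a x y) ∧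
      (∀ a, Transitive (lt a)) ∧
      (∀ a x, ¬ lt a x x) ∧
      (∀ a x y, x ≠ y → lt a x y ∨ lt a y x) ∧
      (∀ a, WellFounded fun x y => lt a y x) := by
  obtain ⟨r, hr⟩ := h1
  haveI := hr
  set ν : A → O → Ordinal := fun a x => ((h2 a).apply x).rank with hν
  have hrank : ∀ a x y, prec a x y → ν a y < ν a x := by
    intro a x y h
    exact Acc.rank_lt_of_rel ((h2 a).apply x) h
  refine ⟨fun a x y => ν a y < ν a x ∨ (ν a x = ν a y ∧ r y x), ?_, ?_, ?_, ?_, ?_⟩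
  · intro a x y h
    exact Or.inl (hrank a x y h)
  · rintro a x y z (h1 | ⟨h1, h1'⟩) (h2 | ⟨h2, h2'⟩)
    · exact Or.inl (h2.trans h1)
    · exact Or.inl (h2 ▸ h1)
    · exact Or.inl (h1 ▸ h2)
    · exact Or.inr ⟨h1.trans h2, IsTrans.trans _ _ _ h2' h1'⟩
  · rintro a x (h | ⟨h, h'⟩)
    · exact lt_irrefl _ h
    · exact (IsWellFounded.wf (r := r)).asymmetric (a := x) (b := x) h' h'
  · intro a x y hxy
    rcases lt_trichotomy (ν a x) (ν a y) with h | h | h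
    · exact Or.inr (Or.inl h)
    · rcases trichotomous_of r x y with h' | h' | h'
      · exact Or.inr (Or.inr ⟨h.symm, h'⟩)
      · exact absurd h' hxy
      · exact Or.inl (Or.inr ⟨h, h'⟩)
    · exact Or.inl (Or.inl h)
  · intro a
    have hwfl : WellFounded (Prod.Lex ((· < ·) : Ordinal → Ordinal → Prop) r) :=
      Ordinal.lt_wf.prod_lex (IsWellFounded.wf (r := r))
    have hwfi : WellFounded (InvImage (Prod.Lex ((· < ·) : Ordinal → Ordinal → Prop) r)
        (fun u : O => ((ν a u, u) : Ordinal × O))) := InvImage.wf _ hwfl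
    apply Subrelation.wf (r := InvImage (Prod.Lex ((· < ·) : Ordinal → Ordinal → Prop) r)
        (fun u : O => ((ν a u, u) : Ordinal × O))) ?_ hwfi
    rintro x y (h | ⟨h, h'⟩)
    · exact Prod.Lex.left _ _ h
    · show Prod.Lex _ _ (ν a x, x) (ν a y, y)
      rw [h]
      exact Prod.Lex.right _ h'

theorem has_max {α : Type*} {R : α → α → Prop}
    (hwf : WellFounded fun x y => R y x)
    (htri : ∀ x y : α, x ≠ y → R x y ∨ R y x)
    (S : Set α) (hS : S.Nonempty) : ∃ m ∈ S, ∀ x ∈ S, x = m ∨ R x m := by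
  obtain ⟨m, hm, hmin⟩ := hwf.has_min S hS
  refine ⟨m, hm, fun x hx => ?_⟩
  by_cases hxm : x = m
  · exact Or.inl hxm
  · rcases htri x m hxm with h | h
    · exact Or.inr h
    · exact absurd h (hmin x hx)



def Dset (d : List C → A) (a : A) (γ : List C) : Set (List C) := {δ | d δ = a ∨ ¬ γ <+: δ}

def SUp (lt : A → O → O → Prop) (a : A) (o : O) : Set O := {o' | lt a o o'}

def Bset (d : List C → A) (v : (ℕ → C) → O) (lt : A → O → O → Prop)
    (a : A) (γ : List C) : Set O :=
  {o | ∃ sa, WinA (Dset d a γ) (v ⁻¹' SUp lt a o ∩ extω γ) sa}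

noncomputable def mxB [Nonempty O] (d : List C → A) (v : (ℕ → C) → O) (lt : A → O → O → Prop)
    (a : A) (γ : List C) : O :=
  Classical.epsilon fun o => o ∈ Bset d v lt a γ ∧ ∀ x ∈ Bset d v lt a γ, x = o ∨ lt a x o

noncomputable def sWit [Nonempty C] [Nonempty O] (d : List C → A) (v : (ℕ → C) → O) (lt : A → O → O → Prop)
    (a : A) (γ : List C) : List C → C :=
  Classical.epsilon fun sa =>
    WinA (Dset d a γ) (v ⁻¹' SUp lt a (mxB d v lt a γ) ∩ extω γ) sa

abbrev St (C A O : Type*) := List C × (A → Option (O × (List C → C)))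

def AC [Nonempty C] [Nonempty O] (d : List C → A) (v : (ℕ → C) → O) (lt : A → O → O → Prop) (σ : St C A O) : Prop :=
  (Bset d v lt (d σ.1) σ.1).Nonempty ∧
    ∀ β S', σ.2 (d σ.1) = some (β, S') → lt (d σ.1) β (mxB d v lt (d σ.1) σ.1)

noncomputable def mov [Nonempty C] [Nonempty O] (d : List C → A) (v : (ℕ → C) → O)
    (lt : A → O → O → Prop) (σ : St C A O) : C :=
  if AC d v lt σ then sWit d v lt (d σ.1) σ.1 σ.1
  else (σ.2 (d σ.1)).elim (Classical.arbitrary C) fun p => p.2 σ.1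

noncomputable def upd [Nonempty C] [Nonempty O] (d : List C → A) (v : (ℕ → C) → O) (lt : A → O → O → Prop)
    (σ : St C A O) : A → Option (O × (List C → C)) :=
  if AC d v lt σ then
    Function.update σ.2 (d σ.1) (some (mxB d v lt (d σ.1) σ.1, sWit d v lt (d σ.1) σ.1))
  else σ.2

noncomputable def σf [Nonempty C] [Nonempty O] (d : List C → A) (v : (ℕ → C) → O)
    (lt : A → O → O → Prop) : ℕ → St C A O
  | 0 => ([], fun _ => none)
  | n + 1 => ((σf d v lt n).1 ++ [mov d v lt (σf d v lt n)], upd d v lt (σf d v lt n))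

def cval : Option (O × (List C → C)) → Option O := Option.map Prod.fst

def Rel (lt : A → O → O → Prop) (a : A) (x y : Option O) : Prop :=
  x = y ∨ (x = none ∧ y ≠ none) ∨ ∃ β β', x = some β ∧ y = some β' ∧ lt a β β'

section Machine

variable [Nonempty C] [Nonempty O] (d : List C → A) (v : (ℕ → C) → O) (lt : A → O → O → Prop)

theorem mxB_spec (hmax : ∀ (a : A) (S : Set O), S.Nonempty → ∃ m ∈ S, ∀ x ∈ S, x = m ∨ lt a x m)
    {a : A} {γ : List C} (hne : (Bset d v lt a γ).Nonempty) :
    mxB d v lt a γ ∈ Bset d v lt a γ ∧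
      ∀ x ∈ Bset d v lt a γ, x = mxB d v lt a γ ∨ lt a x (mxB d v lt a γ) := by
  unfold mxB
  exact Classical.epsilon_spec (hmax a _ hne)

theorem sWit_spec (hmax : ∀ (a : A) (S : Set O), S.Nonempty → ∃ m ∈ S, ∀ x ∈ S, x = m ∨ lt a x m)
    {a : A} {γ : List C} (hne : (Bset d v lt a γ).Nonempty) :
    WinA (Dset d a γ) (v ⁻¹' SUp lt a (mxB d v lt a γ) ∩ extω γ) (sWit d v lt a γ) := by
  unfold sWit
  exact Classical.epsilon_spec (mxB_spec d v lt hmax hne).1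

theorem node_succ (n : ℕ) :
    (σf d v lt (n + 1)).1 = (σf d v lt n).1 ++ [mov d v lt (σf d v lt n)] := rfl

theorem com_succ (n : ℕ) : (σf d v lt (n + 1)).2 = upd d v lt (σf d v lt n) := rfl

theorem length_node (n : ℕ) : (σf d v lt n).1.length = n := by
  induction n with
  | zero => rfl
  | succ n ih => rw [node_succ]; simp [ih]

theorem node_pref (n : ℕ) : (σf d v lt n).1 = pref (fun k => mov d v lt (σf d v lt k)) n := by
  induction n with
  | zero => rfl
  | succ n ih => rw [node_succ, pref_succ, ih]

theorem com_ne {n : ℕ} {b : A} (h : d (σf d v lt n).1 ≠ b) :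
    (σf d v lt (n + 1)).2 b = (σf d v lt n).2 b := by
  rw [com_succ, upd]
  split
  · exact Function.update_of_ne (Ne.symm h) _ _
  · rfl

theorem com_adopt {n : ℕ} (h : AC d v lt (σf d v lt n)) :
    (σf d v lt (n + 1)).2 (d (σf d v lt n).1) =
      some (mxB d v lt (d (σf d v lt n).1) (σf d v lt n).1,
        sWit d v lt (d (σf d v lt n).1) (σf d v lt n).1) := by
  rw [com_succ, upd, if_pos h, Function.update_self]

theorem mov_adopt {n : ℕ} (h : AC d v lt (σf d v lt n)) :
    mov d v lt (σf d v lt n) = sWit d v lt (d (σf d v lt n).1) (σf d v lt n).1 (σf d v lt n).1 := by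
  rw [mov, if_pos h]

theorem com_no {n : ℕ} (h : ¬ AC d v lt (σf d v lt n)) :
    (σf d v lt (n + 1)).2 = (σf d v lt n).2 := by
  rw [com_succ, upd, if_neg h]

theorem mov_no {n : ℕ} (h : ¬ AC d v lt (σf d v lt n)) :
    mov d v lt (σf d v lt n) =
      ((σf d v lt n).2 (d (σf d v lt n).1)).elim (Classical.arbitrary C)
        (fun p => p.2 (σf d v lt n).1) := by
  rw [mov, if_neg h]

theorem change_char {n : ℕ} {a : A} (h : (σf d v lt (n + 1)).2 a ≠ (σf d v lt n).2 a) :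
    d (σf d v lt n).1 = a ∧ AC d v lt (σf d v lt n) := by
  by_cases hown : d (σf d v lt n).1 = a
  · refine ⟨hown, ?_⟩
    by_contra hAC
    exact h (congrFun (com_no d v lt hAC) a)
  · exact absurd (com_ne d v lt hown) h

theorem Rel_step (a : A) (n : ℕ) :
    Rel lt a (cval ((σf d v lt n).2 a)) (cval ((σf d v lt (n + 1)).2 a)) := by
  by_cases hown : d (σf d v lt n).1 = a
  · by_cases hAC : AC d v lt (σf d v lt n)
    · have hc := com_adopt d v lt hAC
      rw [hown] at hc
      rw [hc]
      cases hp : (σf d v lt n).2 a with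
      | none => exact Or.inr (Or.inl ⟨rfl, by simp [cval]⟩)
      | some p =>
        refine Or.inr (Or.inr ⟨p.1, _, by simp [cval], rfl, ?_⟩)
        have := hAC.2 p.1 p.2 (by rw [hown]; rw [hp])
        rwa [hown] at this
    · rw [com_no d v lt hAC]
      exact Or.inl rfl
  · rw [com_ne d v lt hown]
    exact Or.inl rfl

theorem Rel_mono (htr : ∀ a, Transitive (lt a)) (a : A) {n n' : ℕ} (h : n ≤ n') :
    Rel lt a (cval ((σf d v lt n).2 a)) (cval ((σf d v lt n').2 a)) := by
  induction n', h using Nat.le_induction with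
  | base => exact Or.inl rfl
  | succ n' hn ih =>
    have h2 := Rel_step d v lt a n'
    rcases ih with h1 | ⟨h1, h1'⟩ | ⟨β, β', hb, hb', hlt⟩
    · rwa [h1]
    · rcases h2 with h2 | ⟨h2, h2'⟩ | ⟨γ', γ'', hg, hg', hlt2⟩
      · exact Or.inr (Or.inl ⟨h1, h2 ▸ h1'⟩)
      · exact absurd h2 h1'
      · exact Or.inr (Or.inl ⟨h1, by rw [hg']; simp⟩)
    · rcases h2 with h2 | ⟨h2, h2'⟩ | ⟨γ', γ'', hg, hg', hlt2⟩
      · exact Or.inr (Or.inr ⟨β, β', hb, h2 ▸ hb', hlt⟩)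
      · rw [hb'] at h2; simp at h2
      · rw [hb'] at hg
        injection hg with hg
        exact Or.inr (Or.inr ⟨β, γ'', hb, hg', htr a hlt (hg ▸ hlt2)⟩)

theorem exists_stab (htr : ∀ a, Transitive (lt a))
    (hwfc : ∀ a, WellFounded fun x y => lt a y x) (a : A) :
    ∃ N, ∀ n, N ≤ n → (σf d v lt (n + 1)).2 a = (σf d v lt n).2 a := by
  by_contra h
  push_neg at h
  choose F hF1 hF2 using h
  set g : ℕ → ℕ := fun k => Nat.rec (F 0) (fun _ p => F (p + 1)) k with hg
  have hgs : ∀ k, g (k + 1) = F (g k + 1) := fun k => rfl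
  have hch : ∀ k, (σf d v lt (g k + 1)).2 a ≠ (σf d v lt (g k)).2 a := by
    intro k
    cases k with
    | zero => exact hF2 0
    | succ k => rw [hgs]; exact hF2 _
  have hlt : ∀ k, g k + 1 ≤ g (k + 1) := fun k => by rw [hgs]; exact hF1 _
  have had : ∀ k, d (σf d v lt (g k)).1 = a ∧ AC d v lt (σf d v lt (g k)) :=
    fun k => change_char d v lt (hch k)
  set u : ℕ → O := fun k => mxB d v lt a (σf d v lt (g k)).1 with hu
  have hval : ∀ k, cval ((σf d v lt (g k + 1)).2 a) = some (u k) := by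
    intro k
    obtain ⟨hown, hAC⟩ := had k
    have hc := com_adopt d v lt hAC
    rw [hown] at hc
    rw [hc, hu]
    simp [cval]
  have hstep : ∀ k, lt a (u k) (u (k + 1)) := by
    intro k
    have h1 : Rel lt a (some (u k)) (cval ((σf d v lt (g (k + 1))).2 a)) := by
      have := Rel_mono d v lt htr a (hlt k)
      rwa [hval k] at this
    obtain ⟨hown', hAC'⟩ := had (k + 1)
    cases hc : (σf d v lt (g (k + 1))).2 a with
    | none =>
      rw [hc] at h1
      rcases h1 with h1 | ⟨h1, h1'⟩ | ⟨β, β', hb, hb', _⟩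
      · simp [cval] at h1
      · simp at h1
      · simp [cval] at hb'
    | some p =>
      have hlt2 : lt a p.1 (u (k + 1)) := by
        have := hAC'.2 p.1 p.2 (by rw [hown']; rw [hc])
        rwa [hown'] at this
      rw [hc] at h1
      rcases h1 with h1 | ⟨h1, h1'⟩ | ⟨β, β', hb, hb', hlt3⟩
      · simp only [cval, Option.map_some] at h1
        injection h1 with h1
        exact h1 ▸ hlt2
      · simp at h1
      · injection hb with hb
        simp only [cval, Option.map_some] at hb'
        injection hb' with hb'
        exact htr a (hb ▸ hlt3) (hb' ▸ hlt2)
  exact no_ascending (hwfc a) u hstep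

theorem origin (a : A) : ∀ (n : ℕ) (β : O) (S : List C → C),
    (σf d v lt n).2 a = some (β, S) →
    ∃ k, k < n ∧ d (σf d v lt k).1 = a ∧ AC d v lt (σf d v lt k) ∧
      (σf d v lt (k + 1)).2 a = some (β, S) ∧
      β = mxB d v lt a (σf d v lt k).1 ∧ S = sWit d v lt a (σf d v lt k).1 := by
  intro n
  induction n with
  | zero => intro β S h; simp [σf] at h
  | succ n ih =>
    intro β S h
    by_cases hch : (σf d v lt (n + 1)).2 a = (σf d v lt n).2 a
    · rw [hch] at h
      obtain ⟨k, hk, rest⟩ := ih β S h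
      exact ⟨k, Nat.lt_succ_of_lt hk, rest⟩
    · obtain ⟨hown, hAC⟩ := change_char d v lt hch
      have hc := com_adopt d v lt hAC
      rw [hown] at hc
      rw [h] at hc
      injection hc with hc
      injection hc with hc1 hc2
      exact ⟨n, Nat.lt_succ_self n, hown, hAC, h, hc1, hc2⟩

set_option maxHeartbeats 1000000 in
theorem key (hmax : ∀ (a : A) (S : Set O), S.Nonempty → ∃ m ∈ S, ∀ x ∈ S, x = m ∨ lt a x m)
    (htr : ∀ a, Transitive (lt a)) (hirr : ∀ (a : A) (x : O), ¬ lt a x x)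
    (htri : ∀ (a : A) (x y : O), x ≠ y → lt a x y ∨ lt a y x)
    (hwfc : ∀ a, WellFounded fun x y => lt a y x) (n : ℕ) :
    ¬ ∃ sa, WinA (Dset d (d (σf d v lt n).1) (σf d v lt n).1)
      (v ⁻¹' SUp lt (d (σf d v lt n).1) (v (fun k => mov d v lt (σf d v lt k))) ∩
        {p | p ∈ extω (σf d v lt n).1 ∧ p (σf d v lt n).1.length ≠ mov d v lt (σf d v lt n)})
      sa := by
  set M : ℕ → C := fun k => mov d v lt (σf d v lt k) with hM
  set a : A := d (σf d v lt n).1 with ha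
  rintro ⟨sa, hsa⟩
  have hBm : v M ∈ Bset d v lt a (σf d v lt n).1 := by
    refine ⟨sa, fun t ht => ?_⟩
    have := hsa t ht
    exact ⟨this.1, this.2.1⟩
  have hBne : (Bset d v lt a (σf d v lt n).1).Nonempty := ⟨_, hBm⟩
  have hmx := mxB_spec d v lt hmax hBne
  have hvM_le : v M = mxB d v lt a (σf d v lt n).1 ∨ lt a (v M) (mxB d v lt a (σf d v lt n).1) :=
    hmx.2 _ hBm
  -- value after step n dominates mxB at n
  have hkey1 : ∃ β₁, cval ((σf d v lt (n + 1)).2 a) = some β₁ ∧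
      (mxB d v lt a (σf d v lt n).1 = β₁ ∨ lt a (mxB d v lt a (σf d v lt n).1) β₁) := by
    by_cases hAC : AC d v lt (σf d v lt n)
    · have hc := com_adopt d v lt hAC
      rw [← ha] at hc
      exact ⟨mxB d v lt a (σf d v lt n).1, by rw [hc]; simp [cval], Or.inl rfl⟩
    · have h2 : ¬ ∀ β S', (σf d v lt n).2 (d (σf d v lt n).1) = some (β, S') →
          lt (d (σf d v lt n).1) β (mxB d v lt (d (σf d v lt n).1) (σf d v lt n).1) := by
        intro hall
        exact hAC ⟨by rw [← ha]; exact hBne, hall⟩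
      push_neg at h2
      obtain ⟨β, S', hc, hnlt⟩ := h2
      rw [← ha] at hc hnlt
      have hcv : cval ((σf d v lt (n + 1)).2 a) = some β := by
        rw [com_no d v lt hAC, hc]; simp [cval]
      refine ⟨β, hcv, ?_⟩
      by_cases hbe : β = mxB d v lt a (σf d v lt n).1
      · exact Or.inl hbe.symm
      · rcases htri a β (mxB d v lt a (σf d v lt n).1) hbe with h | h
        · exact absurd h hnlt
        · exact Or.inr h
  obtain ⟨β₁, hβ₁, hβ₁'⟩ := hkey1
  obtain ⟨N, hN⟩ := exists_stab d v lt htr hwfc a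
  set j₀ := max N (n + 1) with hj₀
  have hj₀N : N ≤ j₀ := le_max_left _ _
  have hj₀n : n + 1 ≤ j₀ := le_max_right _ _
  have hconstN : ∀ j, N ≤ j → (σf d v lt j).2 a = (σf d v lt N).2 a := by
    intro j hj
    induction j, hj using Nat.le_induction with
    | base => rfl
    | succ j hj ih => rw [hN j hj, ih]
  have hrel : Rel lt a (cval ((σf d v lt (n + 1)).2 a)) (cval ((σf d v lt j₀).2 a)) :=
    Rel_mono d v lt htr a hj₀n
  cases hc₀ : (σf d v lt j₀).2 a with
  | none =>
    rw [hc₀, hβ₁] at hrel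
    rcases hrel with h | ⟨h, _⟩ | ⟨β, β', _, hb', _⟩
    · simp [cval] at h
    · simp at h
    · simp [cval] at hb'
  | some p =>
    obtain ⟨βI, SI⟩ := p
    have hβI : β₁ = βI ∨ lt a β₁ βI := by
      rw [hc₀, hβ₁] at hrel
      rcases hrel with h | ⟨h, _⟩ | ⟨β, β', hb, hb', hlt2⟩
      · simp only [cval, Option.map_some] at h
        exact Or.inl (Option.some_injective _ h)
      · simp at h
      · injection hb with hb
        simp only [cval, Option.map_some] at hb'
        injection hb' with hb'
        exact Or.inr (hb ▸ hb' ▸ hlt2)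
    obtain ⟨k, hk, hownk, hACk, hPk1, hβeq, hSeq⟩ := origin d v lt a j₀ βI SI hc₀
    -- no change from k+1 on
    have hnochange : ∀ j, k + 1 ≤ j → (σf d v lt (j + 1)).2 a = (σf d v lt j).2 a := by
      intro j hj
      by_cases hjj : N ≤ j
      · exact hN j hjj
      · by_contra hch
        have hj1 : j + 1 ≤ j₀ := by omega
        obtain ⟨hownj, hACj⟩ := change_char d v lt hch
        -- value at j
        have hrel1 : Rel lt a (cval ((σf d v lt (k + 1)).2 a)) (cval ((σf d v lt j).2 a)) :=
          Rel_mono d v lt htr a hj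
        rw [hPk1] at hrel1
        cases hcj : (σf d v lt j).2 a with
        | none =>
          rw [hcj] at hrel1
          rcases hrel1 with h | ⟨h, _⟩ | ⟨β, β', _, hb', _⟩
          · simp [cval] at h
          · simp [cval] at h
          · simp [cval] at hb'
        | some q =>
          have hβj : βI = q.1 ∨ lt a βI q.1 := by
            rw [hcj] at hrel1
            rcases hrel1 with h | ⟨h, _⟩ | ⟨β, β', hb, hb', hlt2⟩
            · simp only [cval, Option.map_some] at h
              exact Or.inl (Option.some_injective _ h)
            · simp [cval] at h
            · simp only [cval, Option.map_some] at hb hb'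
              injection hb with hb
              injection hb' with hb'
              exact Or.inr (hb ▸ hb' ▸ hlt2)
          -- adoption at j gives strict increase above q.1
          have hcadopt := com_adopt d v lt hACj
          rw [hownj] at hcadopt
          have hltj : lt a q.1 (mxB d v lt a (σf d v lt j).1) := by
            have := hACj.2 q.1 q.2 (by rw [hownj]; rw [hcj])
            rwa [hownj] at this
          -- value at j+1 is bounded by βI
          have hrel2 : Rel lt a (cval ((σf d v lt (j + 1)).2 a)) (cval ((σf d v lt j₀).2 a)) :=
            Rel_mono d v lt htr a hj1
          rw [hc₀, hcadopt] at hrel2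
          have hle : mxB d v lt a (σf d v lt j).1 = βI ∨ lt a (mxB d v lt a (σf d v lt j).1) βI := by
            rcases hrel2 with h | ⟨h, _⟩ | ⟨β, β', hb, hb', hlt2⟩
            · simp only [cval, Option.map_some] at h
              exact Or.inl (Option.some_injective _ h)
            · simp [cval] at h
            · simp only [cval, Option.map_some] at hb hb'
              injection hb with hb
              injection hb' with hb'
              exact Or.inr (hb ▸ hb' ▸ hlt2)
          -- contradiction: βI ⊑ q.1 ⊏ mxB_j ⊑ βI
          have hbx : lt a βI (mxB d v lt a (σf d v lt j).1) := by
            rcases hβj with h1 | h1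
            · rw [h1]; exact hltj
            · exact htr a h1 hltj
          have hfinal : lt a βI βI := by
            rcases hle with h2 | h2
            · rw [h2] at hbx; exact hbx
            · exact htr a hbx h2
          exact hirr a βI hfinal
    -- commitment constant from k+1 on
    have hPconst : ∀ j, k + 1 ≤ j → (σf d v lt j).2 a = some (βI, SI) := by
      intro j hj
      induction j, hj using Nat.le_induction with
      | base => exact hPk1
      | succ j hj ih => rw [hnochange j hj, ih]
    -- moves at a's nodes from k+1 on follow SI
    have hmov : ∀ j, k + 1 ≤ j → d (σf d v lt j).1 = a →
        mov d v lt (σf d v lt j) = SI (σf d v lt j).1 := by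
      intro j hj hown
      by_cases hACj : AC d v lt (σf d v lt j)
      · exfalso
        have hcadopt := com_adopt d v lt hACj
        rw [hown] at hcadopt
        have h1 := hPconst (j + 1) (by omega)
        rw [hcadopt] at h1
        injection h1 with h1
        injection h1 with h11 h12
        have hstrict : lt a βI (mxB d v lt a (σf d v lt j).1) := by
          have := hACj.2 βI SI (by rw [hown]; exact hPconst j hj)
          rwa [hown] at this
        rw [h11] at hstrict
        exact hirr a βI hstrict
      · have := mov_no d v lt hACj
        rw [hown, hPconst j hj] at this
        simpa using this
    have hmovk : mov d v lt (σf d v lt k) = SI (σf d v lt k).1 := by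
      have := mov_adopt d v lt hACk
      rw [hownk, ← hSeq] at this
      exact this
    -- SI is winning for threshold βI from node k
    have hSwin : WinA (Dset d a (σf d v lt k).1)
        (v ⁻¹' SUp lt a βI ∩ extω (σf d v lt k).1) SI := by
      rw [hβeq, hSeq]
      apply sWit_spec d v lt hmax
      have := hACk.1
      rwa [hownk] at this
    -- the main play is consistent with SI
    have hMW : M ∈ v ⁻¹' SUp lt a βI ∩ extω (σf d v lt k).1 := by
      apply followA hSwin M
      intro j hD
      have hpr : ∀ jj, pref M jj = (σf d v lt jj).1 := by
        intro jj
        rw [hM]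
        exact (node_pref d v lt jj).symm
      rcases lt_trichotomy j k with hjk | hjk | hjk
      · -- j < k : use steer
        have htake : pref M j = ((σf d v lt k).1).take j := by
          rw [← hpr k]
          exact pref_eq_take M (le_of_lt hjk)
        have hjlen : j < ((σf d v lt k).1).length := by rw [length_node]; exact hjk
        have hD' : ((σf d v lt k).1).take j ∈ Dset d a (σf d v lt k).1 := htake ▸ hD
        have hst := steer hSwin Set.inter_subset_right hjlen hD'
        rw [htake, hst]
        have e2 : ((σf d v lt k).1)[j]'hjlen = M j := by
          rw [List.getElem_of_eq ((hpr k).symm) hjlen]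
          exact getElem_pref M _
        exact e2
      · subst hjk
        rw [hpr j]
        simp only [hM]
        exact hmovk.symm
      · -- k < j
        rw [hpr j] at hD ⊢
        rcases hD with hD | hD
        · simp only [hM]
          exact (hmov j (by omega) hD).symm
        · exfalso
          apply hD
          have : (σf d v lt k).1 = ((σf d v lt j).1).take k := by
            rw [node_pref d v lt k, node_pref d v lt j]
            exact pref_eq_take _ (le_of_lt hjk)
          rw [this]
          exact List.take_prefix _ _
    have hfin : lt a βI (v M) := hMW.1
    -- final contradiction
    have hc1 : lt a (v M) β₁ ∨ v M = β₁ := by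
      rcases hvM_le with h1 | h1 <;> rcases hβ₁' with h2 | h2
      · exact Or.inr (h1.trans h2)
      · exact Or.inl (h1 ▸ h2)
      · rw [h2] at h1; exact Or.inl h1
      · exact Or.inl (htr a h1 h2)
    have hc2 : lt a (v M) βI ∨ v M = βI := by
      rcases hc1 with h1 | h1 <;> rcases hβI with h2 | h2
      · exact Or.inl (h2 ▸ h1)
      · exact Or.inl (htr a h1 h2)
      · exact Or.inr (h1.trans h2)
      · rw [h1]; exact Or.inl h2
    rcases hc2 with h | h
    · exact hirr a (v M) (htr a h hfin)
    · rw [← h] at hfin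
      exact hirr a (v M) hfin

end Machine



end TransferAux
end

/-- **Transfer theorem.** If O is well-orderable, each inverse
preference is strictly well-founded, the relevant sets built from v lie in Γ, and all
two-agent win-lose games with winning sets in Γ are determined, then the infinite
sequential game has a Nash equilibrium. -/
theorem transfer_theorem {A C O : Type*} [Nonempty A] [Nonempty C] [Nonempty O]
    (d : List C → A) (v : (ℕ → C) → O) (prec : A → O → O → Prop)
    (Γ : Set (Set (ℕ → C)))
    (h1 : ∃ r : O → O → Prop, IsWellOrder O r)
    (h2 : ∀ a, WellFounded (fun x y => prec a y x))
    (h3 : ∀ (O' : Set O) (c : C) (γ : List C),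
      v ⁻¹' O' ∩ {p | p ∈ extω γ ∧ p γ.length ≠ c} ∈ Γ)
    (h4 : ∀ W ∈ Γ, ∀ D : Set (List C), Determined D W) :
    ∃ s : List C → C, NashEq d v prec s := by
  classical
  obtain ⟨lt, hprec, htr, hirr, htri, hwfc⟩ := TransferAux.exists_linear prec h1 h2
  have hmax : ∀ (a : A) (S : Set O), S.Nonempty → ∃ m ∈ S, ∀ x ∈ S, x = m ∨ lt a x m :=
    fun a S hS => TransferAux.has_max (hwfc a) (fun x y h => htri a x y h) S hS
  set M : ℕ → C := fun k => TransferAux.mov d v lt (TransferAux.σf d v lt k) with hM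
  -- punishment strategies at every node of the main play
  have hpun : ∀ n, ∃ sb, WinB
      (TransferAux.Dset d (d (TransferAux.σf d v lt n).1) (TransferAux.σf d v lt n).1)
      (v ⁻¹' TransferAux.SUp lt (d (TransferAux.σf d v lt n).1) (v M) ∩
        {p | p ∈ extω (TransferAux.σf d v lt n).1 ∧
          p (TransferAux.σf d v lt n).1.length ≠ M n}) sb := by
    intro n
    have hmem := h3 (TransferAux.SUp lt (d (TransferAux.σf d v lt n).1) (v M)) (M n)
      (TransferAux.σf d v lt n).1
    have hdet := h4 _ hmem
      (TransferAux.Dset d (d (TransferAux.σf d v lt n).1) (TransferAux.σf d v lt n).1)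
    rcases hdet with ⟨sa, hsa⟩ | h
    · exact absurd ⟨sa, hsa⟩ (TransferAux.key d v lt hmax htr hirr htri hwfc n)
    · exact h
  choose sb hsb using hpun
  -- divergence index
  set Dvg : List C → Set ℕ :=
    fun δ => {i | i < δ.length ∧ δ.getD i (Classical.arbitrary C) ≠ M i} with hDvg
  set J : List C → ℕ := fun δ => sInf (Dvg δ) with hJ
  have hdiv : ∀ δ : List C, δ ≠ pref M δ.length → (Dvg δ).Nonempty := by
    intro δ hδ
    by_contra hne
    apply hδ
    rw [Set.not_nonempty_iff_eq_empty] at hne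
    apply List.ext_getElem (by rw [TransferAux.length_pref])
    intro i h1 h2
    have hi : i ∉ Dvg δ := by rw [hne]; exact Set.notMem_empty i
    rw [hDvg] at hi
    simp only [Set.mem_setOf_eq, not_and, not_not] at hi
    have := hi h1
    rw [List.getD_eq_getElem δ _ h1] at this
    rw [this, TransferAux.getElem_pref]
  -- the equilibrium profile
  set s : List C → C := fun δ =>
    if δ = pref M δ.length then M δ.length else sb (J δ) δ with hs
  have hplay : play s = M := by
    apply TransferAux.play_path
    intro n
    have hcond : pref M n = pref M (pref M n).length := by rw [TransferAux.length_pref]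
    rw [hs]
    simp only [← hcond, if_true]
    rw [TransferAux.length_pref]
  refine ⟨s, ?_⟩
  intro a s' hs'
  by_cases hqM : ∀ i, play s' i = M i
  · have hq : play s' = M := funext hqM
    rw [hq, hplay]
    intro hpr
    exact (h2 a).asymmetric (a := v M) (b := v M) hpr hpr
  · push_neg at hqM
    set q : ℕ → C := play s' with hq
    have hSne : {i | q i ≠ M i}.Nonempty := hqM
    set n := sInf {i | q i ≠ M i} with hn
    have hnmem : q n ≠ M n := Nat.sInf_mem hSne
    have hnmin : ∀ i, i < n → q i = M i := by
      intro i hi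
      by_contra hne
      exact absurd (Nat.sInf_le hne) (not_le_of_gt hi)
    have hprefq : ∀ j, j ≤ n → pref q j = pref M j := by
      intro j hj
      exact TransferAux.pref_ext (fun i hi => hnmin i (lt_of_lt_of_le hi hj))
    have hnd : (TransferAux.σf d v lt n).1 = pref M n := TransferAux.node_pref d v lt n
    have hqplay : ∀ j, q j = s' (pref q j) := by
      intro j
      rw [hq, play, TransferAux.pref_play]
    -- the deviation happens at an a-owned node
    have hown : d (TransferAux.σf d v lt n).1 = a := by
      by_contra hda
      apply hnmem
      have h1 : s' ((TransferAux.σf d v lt n).1) = s ((TransferAux.σf d v lt n).1) :=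
        hs' _ hda
      have h2 : s ((TransferAux.σf d v lt n).1) = M n := by
        rw [hs, hnd]
        have hcond : pref M n = pref M (pref M n).length := by rw [TransferAux.length_pref]
        simp only [← hcond, if_true]
        rw [TransferAux.length_pref]
      calc q n = s' (pref q n) := hqplay n
        _ = s' ((TransferAux.σf d v lt n).1) := by rw [hprefq n le_rfl, hnd]
        _ = M n := by rw [h1, h2]
    -- the play of s' is punished
    have hqnotW := TransferAux.followB (hsb n) q ?_
    · -- q is in the deviation region, hence its value is not above v M
      have hqdev : q ∈ {p | p ∈ extω (TransferAux.σf d v lt n).1 ∧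
          p (TransferAux.σf d v lt n).1.length ≠ M n} := by
        constructor
        · show pref q (TransferAux.σf d v lt n).1.length = (TransferAux.σf d v lt n).1
          rw [TransferAux.length_node, hprefq n le_rfl, hnd]
        · rw [TransferAux.length_node]
          exact hnmem
      have hnlt : ¬ lt (d (TransferAux.σf d v lt n).1) (v M) (v q) :=
        fun hvq => hqnotW ⟨hvq, hqdev⟩
      rw [hown] at hnlt
      intro hpr
      rw [hplay] at hpr
      exact hnlt (hprec a _ _ hpr)
    · -- q follows the punishment strategy outside D
      intro j hD
      have hjlen : (pref q j).length = j := TransferAux.length_pref q j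
      simp only [TransferAux.Dset, Set.mem_setOf_eq, not_or, not_not] at hD
      obtain ⟨hDd, hDpre⟩ := hD
      have hjn : n < j := by
        have hlen := hDpre.length_le
        rw [TransferAux.length_node, hjlen] at hlen
        rcases lt_or_eq_of_le hlen with h | h
        · exact h
        · exfalso
          apply hDd
          have : (TransferAux.σf d v lt n).1 = pref q j := by
            apply List.IsPrefix.eq_of_length hDpre
            rw [TransferAux.length_node, hjlen, h]
          rw [this]
      -- pref q j is off the main path with divergence index n
      have hgetD : ∀ i, i < j → (pref q j).getD i (Classical.arbitrary C) = q i := by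
        intro i hi
        rw [List.getD_eq_getElem _ _ (by rw [hjlen]; exact hi), TransferAux.getElem_pref]
      have hoff : pref q j ≠ pref M (pref q j).length := by
        rw [hjlen]
        intro heq
        apply hnmem
        have h1 : (pref q j)[n]'(by rw [hjlen]; exact hjn) = q n :=
          TransferAux.getElem_pref q _
        have h2 : (pref M j)[n]'(by rw [TransferAux.length_pref]; exact hjn) = M n :=
          TransferAux.getElem_pref M _
        rw [← h1, ← h2]
        exact List.getElem_of_eq heq (by rw [hjlen]; exact hjn)
      have hJn : J (pref q j) = n := by
        have hmem : n ∈ Dvg (pref q j) := by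
          rw [hDvg]
          refine ⟨by rw [hjlen]; exact hjn, ?_⟩
          rw [hgetD n hjn]
          exact hnmem
        apply le_antisymm
        · exact Nat.sInf_le hmem
        · by_contra hlt
          push_neg at hlt
          have hJmem : J (pref q j) ∈ Dvg (pref q j) := Nat.sInf_mem ⟨n, hmem⟩
          rw [hDvg] at hJmem
          obtain ⟨hJ1, hJ2⟩ := hJmem
          apply hJ2
          rw [hjlen] at hJ1
          rw [hgetD _ hJ1]
          exact hnmin _ hlt
      have hsval : s (pref q j) = sb n (pref q j) := by
        rw [hs]
        simp only [if_neg hoff]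
        rw [hJn]
      have hs'val : s' (pref q j) = s (pref q j) := by
        apply hs'
        rw [hown] at hDd
        exact hDd
      rw [← hsval, ← hs'val]
      exact (hqplay j).symm
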